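/- Let R be a Noetherian local ring and X a resolving subcategory of finitely generated R-modules. Suppose there exist a finitely generated R-module M and an M-regular sequence x₁, …, x_n such that M/(x₁,…,x_n)M belongs to X. Then X has infinite radius. -/

import Mathlib

open CategoryTheory

noncomputable section

namespace Paper

variable (R : Type) [CommRing R]

/-- finitely generated projective module (object of `add R`) -/
def FGProj (M : ModuleCat.{0} R) : Prop := Module.Finite R M ∧ Module.Projective R M

/-- a short exact sequence `0 → L → M → N → 0` -/
def SES {L M N : ModuleCat.{0} R} (f : L →ₗ[R] M) (g : M →ₗ[R] N) : Prop :=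
  Function.Injective f ∧ Function.Surjective g ∧ LinearMap.ker g = LinearMap.range f

/-- `N` is a first syzygy of `M`: kernel of a surjection from a f.g. projective onto `M`. -/
def IsSyzygy (N M : ModuleCat.{0} R) : Prop :=
  ∃ (P : ModuleCat.{0} R) (f : P →ₗ[R] M), FGProj R P ∧ Function.Surjective f ∧
    Nonempty (N ≃ₗ[R] LinearMap.ker f)

/-- `N` is an `n`-th syzygy of `M` -/
def IsNthSyzygy : ℕ → ModuleCat.{0} R → ModuleCat.{0} R → Prop
  | 0, N, M => Nonempty (N ≃ₗ[R] M)
  | (n+1), N, M => ∃ K : ModuleCat.{0} R, IsNthSyzygy n K M ∧ IsSyzygy R N K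

/-- `f : M → P` is a left `add R`-approximation -/
def IsLeftApprox {M P : ModuleCat.{0} R} (f : M →ₗ[R] P) : Prop :=
  FGProj R P ∧ ∀ (Q : ModuleCat.{0} R), FGProj R Q → ∀ g : M →ₗ[R] Q,
    ∃ h : P →ₗ[R] Q, h.comp f = g

/-- `N` is a first cosyzygy of `M`: cokernel of a left `add R`-approximation. -/
def IsCosyzygy (N M : ModuleCat.{0} R) : Prop :=
  ∃ (P : ModuleCat.{0} R) (f : M →ₗ[R] P), IsLeftApprox R f ∧
    Nonempty (N ≃ₗ[R] (P ⧸ LinearMap.range f))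

/-- `N` is an `n`-th cosyzygy of `M` -/
def IsNthCosyzygy : ℕ → ModuleCat.{0} R → ModuleCat.{0} R → Prop
  | 0, N, M => Nonempty (N ≃ₗ[R] M)
  | (n+1), N, M => ∃ K : ModuleCat.{0} R, IsNthCosyzygy n K M ∧ IsCosyzygy R N K

/-- `T` is an (Auslander) transpose of `M` -/
def IsTranspose (T M : ModuleCat.{0} R) : Prop :=
  ∃ (P₁ P₀ : ModuleCat.{0} R) (d : P₁ →ₗ[R] P₀) (p : P₀ →ₗ[R] M),
    FGProj R P₁ ∧ FGProj R P₀ ∧ Function.Surjective p ∧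
    LinearMap.ker p = LinearMap.range d ∧
    Nonempty (T ≃ₗ[R] ((Module.Dual R P₁) ⧸ LinearMap.range d.dualMap))

/-- stably isomorphic: `M ⊕ P ≅ N ⊕ Q` with `P`, `Q` f.g. projective -/
def StablyIso (M N : ModuleCat.{0} R) : Prop :=
  ∃ P Q : ModuleCat.{0} R, FGProj R P ∧ FGProj R Q ∧
    Nonempty ((M × P) ≃ₗ[R] (N × Q))

/-- resolving subcategory of `mod R` -/
structure Resolving (X : ModuleCat.{0} R → Prop) : Prop where
  fg : ∀ M, X M → Module.Finite R M
  proj : ∀ M : ModuleCat.{0} R, FGProj R M → X M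
  summand : ∀ M N N' : ModuleCat.{0} R, X M → Nonempty (M ≃ₗ[R] N × N') → X N
  extension : ∀ (L M N : ModuleCat.{0} R) (f : L →ₗ[R] M) (g : M →ₗ[R] N),
      SES R f g → X L → X N → X M
  ker_epi : ∀ (L M N : ModuleCat.{0} R) (f : L →ₗ[R] M) (g : M →ₗ[R] N),
      SES R f g → X M → X N → X L

/-- `Ext^i_R(M, N) = 0` -/
def ExtVanish (M N : ModuleCat.{0} R) (i : ℕ) : Prop :=
  Subsingleton (((Ext R (ModuleCat.{0} R) i).obj (Opposite.op M)).obj N)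

/-- totally reflexive (Gorenstein dimension zero) module -/
def TotallyReflexive (M : ModuleCat.{0} R) : Prop :=
  Function.Bijective (Module.Dual.eval R M) ∧
  ∀ i : ℕ, 0 < i → ExtVanish R M (ModuleCat.of R R) i ∧
    ExtVanish R (ModuleCat.of R (Module.Dual R M)) (ModuleCat.of R R) i

/-- `M` has finite projective dimension -/
def FiniteProjDim (M : ModuleCat.{0} R) : Prop :=
  ∃ (n : ℕ) (N : ModuleCat.{0} R), IsNthSyzygy R n N M ∧ FGProj R N

/-- additive closure of a family of modules -/
def AddClosure (S : ModuleCat.{0} R → Prop) (M : ModuleCat.{0} R) : Prop :=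
  ∃ (k : ℕ) (f : Fin k → ModuleCat.{0} R) (N : ModuleCat.{0} R),
    (∀ i, S (f i)) ∧ Nonempty ((M × N) ≃ₗ[R] ((i : Fin k) → f i))

/-- the operation `[−]`: `add` closure of `R` and all syzygies of modules of `Y` -/
def Bracket (Y : ModuleCat.{0} R → Prop) : ModuleCat.{0} R → Prop :=
  AddClosure R (fun N => FGProj R N ∨ ∃ (M : ModuleCat.{0} R) (i : ℕ), Y M ∧ IsNthSyzygy R i N M)

/-- `Y ∘ Z`: extensions of a module of `Z` by a module of `Y` -/
def ExtOf (Y Z : ModuleCat.{0} R → Prop) (M : ModuleCat.{0} R) : Prop :=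
  ∃ (A B : ModuleCat.{0} R) (f : A →ₗ[R] M) (g : M →ₗ[R] B), Y A ∧ Z B ∧ SES R f g

/-- the ball `[C]_n` of radius `n` centered at `C` -/
def Ball (C : ModuleCat.{0} R) : ℕ → ModuleCat.{0} R → Prop
  | 0 => fun _ => False
  | 1 => Bracket R (fun M => Nonempty (M ≃ₗ[R] C))
  | (n+2) => Bracket R (ExtOf R (Ball C (n+1)) (Bracket R (fun M => Nonempty (M ≃ₗ[R] C))))

/-- `X` has finite radius: `X ⊆ [C]_{n+1}` for some `C ∈ X`. -/
def FiniteRadius (X : ModuleCat.{0} R → Prop) : Prop :=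
  ∃ (C : ModuleCat.{0} R) (n : ℕ), X C ∧ ∀ M, X M → Ball R C (n + 1) M

/-- `depth_A M ≥ n`: there is a weakly `M`-regular sequence of length `n` in the maximal ideal -/
def DepthGE (A : Type) [CommRing A] [IsLocalRing A]
    (M : Type) [AddCommGroup M] [Module A M] (n : ℕ) : Prop :=
  ∃ rs : List A, rs.length = n ∧ (∀ x ∈ rs, x ∈ IsLocalRing.maximalIdeal A) ∧
    RingTheory.Sequence.IsWeaklyRegular M rs

/-- `M` is free at the prime `p` -/
def FreeAt (M : ModuleCat.{0} R) (p : PrimeSpectrum R) : Prop :=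
  Module.Free (Localization.AtPrime p.asIdeal) (LocalizedModule p.asIdeal.primeCompl M)

/-- locally free on the punctured spectrum of a local ring -/
def LocFreeOnPunctured [IsLocalRing R] (M : ModuleCat.{0} R) : Prop :=
  ∀ p : PrimeSpectrum R, p.asIdeal ≠ IsLocalRing.maximalIdeal R → FreeAt R M p

/-- a Gorenstein local ring: `R` has finite injective dimension over itself -/
def Gorenstein : Prop :=
  ∃ n : ℕ, ∀ i : ℕ, n < i → ∀ M : ModuleCat.{0} R, ExtVanish R M (ModuleCat.of R R) i

/-- the annihilator of the `i`-th local cohomology module `H^i_I(M)` -/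
def aa (I : Ideal R) (i : ℕ) (M : ModuleCat.{0} R) : Ideal R :=
  Module.annihilator R ((localCohomology I i).obj M)

/-- an Ulrich module over a CM local ring of dimension `d` -/
def Ulrich [IsLocalRing R] (d : ℕ) (U : ModuleCat.{0} R) : Prop :=
  Module.Finite R U ∧ DepthGE R U d ∧ ¬ Subsingleton U ∧
  ∃ xs : List R, xs.length = d ∧ (∀ x ∈ xs, x ∈ IsLocalRing.maximalIdeal R) ∧
    RingTheory.Sequence.IsWeaklyRegular U xs ∧
    (IsLocalRing.maximalIdeal R) • (⊤ : Submodule R U) = Ideal.ofList xs • ⊤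

end Paper

open Paper

section InfiniteRadiusAux

open Pointwise

variable {R : Type} [CommRing R]

/-- `N` has `x`-power-torsion exponent at most `e`. -/
def TorBdd (x : R) (e : ℕ) (N : Type) [AddCommGroup N] [Module R N] : Prop :=
  ∀ z : N, (∃ s : ℕ, x ^ s • z = 0) → x ^ e • z = 0

namespace TorBdd

variable {x : R}

lemma mono {e e' : ℕ} {N : Type} [AddCommGroup N] [Module R N]
    (h : TorBdd x e N) (hee : e ≤ e') : TorBdd x e' N := by
  intro z hz
  obtain ⟨c, rfl⟩ := Nat.exists_eq_add_of_le hee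
  rw [add_comm, pow_add, mul_smul, h z hz, smul_zero]

lemma of_injective {N N' : Type} [AddCommGroup N] [Module R N] [AddCommGroup N'] [Module R N']
    {e : ℕ} (h : TorBdd x e N) (f : N' →ₗ[R] N) (hf : Function.Injective f) :
    TorBdd x e N' := by
  rintro z ⟨s, hs⟩
  have h1 : x ^ e • f z = 0 := h (f z) ⟨s, by rw [← map_smul, hs, map_zero]⟩
  apply hf
  rw [map_smul, map_zero]
  exact h1

lemma of_equiv {N N' : Type} [AddCommGroup N] [Module R N] [AddCommGroup N'] [Module R N']
    {e : ℕ} (h : TorBdd x e N) (f : N' ≃ₗ[R] N) : TorBdd x e N' :=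
  h.of_injective f.toLinearMap f.injective

end TorBdd

lemma torBdd_exists (N : Type) [AddCommGroup N] [Module R N] [IsNoetherian R N] (x : R) :
    ∃ e, TorBdd x e N := by
  have hmono : Monotone fun s => LinearMap.ker (LinearMap.lsmul R N (x ^ s)) := by
    intro a b hab z hz
    simp only [LinearMap.mem_ker, LinearMap.lsmul_apply] at *
    obtain ⟨c, rfl⟩ := Nat.exists_eq_add_of_le hab
    rw [add_comm, pow_add, mul_smul, hz, smul_zero]
  set F : ℕ →o Submodule R N := ⟨fun s => LinearMap.ker (LinearMap.lsmul R N (x ^ s)), hmono⟩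
    with hF
  obtain ⟨n, hn⟩ := monotone_stabilizes_iff_noetherian.mpr inferInstance F
  refine ⟨n, fun z hz => ?_⟩
  obtain ⟨s, hs⟩ := hz
  have hz2 : z ∈ F (n + s) := by
    simp only [hF, OrderHom.coe_mk, LinearMap.mem_ker, LinearMap.lsmul_apply]
    rw [pow_add, mul_smul, hs, smul_zero]
  rw [← hn (n + s) (Nat.le_add_right n s)] at hz2
  simpa only [hF, OrderHom.coe_mk, LinearMap.mem_ker, LinearMap.lsmul_apply] using hz2

lemma torBdd_pi {x : R} {k : ℕ} (f : Fin k → ModuleCat.{0} R) {e : ℕ}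
    (h : ∀ i, TorBdd x e (f i)) : TorBdd x e ((i : Fin k) → f i) := by
  rintro z ⟨s, hs⟩
  funext i
  simpa only [Pi.smul_apply, Pi.zero_apply] using
    h i (z i) ⟨s, by simpa only [Pi.smul_apply, Pi.zero_apply] using congrFun hs i⟩

lemma torBdd_projective {x : R} {P : Type} [AddCommGroup P] [Module R P]
    (hP : Module.Projective R P) {e : ℕ} (hR : TorBdd x e R) : TorBdd x e P := by
  obtain ⟨s, hs⟩ := Module.projective_def.mp hP
  refine TorBdd.of_injective ?_ s hs.injective
  rintro z ⟨m, hm⟩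
  ext a
  have h1 : x ^ m • z a = 0 := by rw [← Finsupp.smul_apply, hm]; rfl
  simpa using hR (z a) ⟨m, h1⟩

lemma torBdd_syzygy {x : R} {N M' : ModuleCat.{0} R} (h : IsSyzygy R N M') {e : ℕ}
    (hR : TorBdd x e R) : TorBdd x e N := by
  obtain ⟨P, f, hP, -, ⟨eqv⟩⟩ := h
  exact ((torBdd_projective hP.2 hR).of_injective (LinearMap.ker f).subtype
    (Submodule.injective_subtype _)).of_equiv eqv

lemma torBdd_nth {x : R} {i : ℕ} {N M' : ModuleCat.{0} R} (h : IsNthSyzygy R i N M')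
    {e eM : ℕ} (hR : TorBdd x e R) (hM : TorBdd x eM M') : TorBdd x (max e eM) N := by
  cases i with
  | zero =>
    obtain ⟨eqv⟩ := h
    exact (hM.of_equiv eqv).mono (le_max_right _ _)
  | succ i =>
    obtain ⟨K, -, hsyz⟩ := h
    exact (torBdd_syzygy hsyz hR).mono (le_max_left _ _)

lemma torBdd_bracket {x : R} {Y : ModuleCat.{0} R → Prop} {e eY : ℕ} (hR : TorBdd x e R)
    (hY : ∀ M', Y M' → TorBdd x eY M') :
    ∀ M', Bracket R Y M' → TorBdd x (max e eY) M' := by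
  rintro M' ⟨k, f, N', hS, ⟨eqv⟩⟩
  have hfi : ∀ i, TorBdd x (max e eY) (f i) := by
    intro i
    rcases hS i with hproj | ⟨M₀, i₀, hM₀, hnth⟩
    · exact (torBdd_projective hproj.2 hR).mono (le_max_left _ _)
    · exact torBdd_nth hnth hR (hY _ hM₀)
  exact (torBdd_pi f hfi).of_injective (eqv.toLinearMap.comp (LinearMap.inl R M' N'))
    (eqv.injective.comp LinearMap.inl_injective)

lemma torBdd_ses {x : R} {L M' N : ModuleCat.{0} R} {f : L →ₗ[R] M'} {g : M' →ₗ[R] N}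
    (hses : SES R f g) {a b : ℕ} (hL : TorBdd x a L) (hN : TorBdd x b N) :
    TorBdd x (a + b) M' := by
  rintro z ⟨s, hs⟩
  have h1 : x ^ b • g z = 0 := hN (g z) ⟨s, by rw [← map_smul, hs, map_zero]⟩
  have h2 : x ^ b • z ∈ LinearMap.ker g := by rw [LinearMap.mem_ker, map_smul, h1]
  rw [hses.2.2] at h2
  obtain ⟨w, hw⟩ := h2
  have h3 : f (x ^ s • w) = 0 := by
    rw [map_smul, hw, smul_comm, hs, smul_zero]
  have h4 : x ^ s • w = 0 := hses.1 (by rw [h3, map_zero])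
  have h5 : x ^ a • w = 0 := hL w ⟨s, h4⟩
  rw [pow_add, mul_smul, ← hw, ← map_smul, h5, map_zero]

lemma torBdd_ball {x : R} {C : ModuleCat.{0} R} {e eC : ℕ} (hR : TorBdd x e R)
    (hC : TorBdd x eC C) :
    ∀ (n : ℕ) (M' : ModuleCat.{0} R), Ball R C (n + 1) M' →
      TorBdd x ((n + 1) * max e eC) M' := by
  have hEe : e ≤ max e eC := le_max_left _ _
  have hcenter : ∀ M' : ModuleCat.{0} R, Nonempty (M' ≃ₗ[R] C) →
      TorBdd x (max e eC) M' := by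
    rintro M' ⟨eqv⟩
    exact (hC.of_equiv eqv).mono (le_max_right _ _)
  intro n
  induction n with
  | zero =>
    intro M' hM'
    have hb : Bracket R (fun M'' => Nonempty (M'' ≃ₗ[R] C)) M' := hM'
    have := torBdd_bracket hR hcenter M' hb
    exact (this.mono (max_le hEe le_rfl)).mono (by omega)
  | succ n ih =>
    intro M' hM'
    have hb : Bracket R (ExtOf R (Ball R C (n + 1))
        (Bracket R fun M'' => Nonempty (M'' ≃ₗ[R] C))) M' := hM'
    have hext : ∀ M₀, ExtOf R (Ball R C (n + 1))
        (Bracket R fun M'' => Nonempty (M'' ≃ₗ[R] C)) M₀ →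
        TorBdd x ((n + 1) * max e eC + max e eC) M₀ := by
      rintro M₀ ⟨A, B, fA, gB, hA, hB, hses⟩
      exact torBdd_ses hses (ih A hA)
        ((torBdd_bracket hR hcenter B hB).mono (max_le hEe le_rfl))
    have := torBdd_bracket hR hext M' hb
    refine this.mono ?_
    have h2 : (n + 1 + 1) * max e eC = (n + 1) * max e eC + max e eC := Nat.succ_mul _ _
    rw [h2]
    exact max_le (le_trans hEe (Nat.le_add_left _ _)) le_rfl

/-- a module is linearly equivalent to its product with the trivial module -/
def linearEquivProdPUnit (A : Type) [AddCommGroup A] [Module R A] :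
    A ≃ₗ[R] A × PUnit where
  toFun a := (a, PUnit.unit)
  map_add' := by intros; rfl
  map_smul' := by intros; rfl
  invFun p := p.1
  left_inv a := rfl
  right_inv p := rfl

open RingTheory.Sequence in
lemma reduce_regular_sequence : ∀ (xs : List R), xs ≠ [] → ∀ (M : ModuleCat.{0} R),
    IsRegular M xs →
    ∃ (N : ModuleCat.{0} R) (x : R), IsSMulRegular N x ∧ ¬ Subsingleton (QuotSMulTop x N) ∧
      Nonempty ((M ⧸ (Ideal.ofList xs • (⊤ : Submodule R M))) ≃ₗ[R] QuotSMulTop x N) := by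
  intro xs
  induction xs with
  | nil => intro h; exact absurd rfl h
  | cons y ys ih =>
    intro _ M hreg
    rw [isRegular_cons_iff] at hreg
    obtain ⟨hy, hreg'⟩ := hreg
    by_cases hys : ys = []
    · subst hys
      refine ⟨M, y, hy, ?_, ?_⟩
      · intro hsub
        refine hreg'.top_ne_smul ?_
        rw [Ideal.ofList_nil, Submodule.bot_smul]
        ext z
        simpa using Subsingleton.elim z 0
      · exact ⟨(Submodule.quotOfListConsSMulTopEquivQuotSMulTopInner M y []).trans
          (Submodule.quotEquivOfEqBot _ (by rw [Ideal.ofList_nil, Submodule.bot_smul]))⟩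
    · obtain ⟨N, z, hz, hnt, ⟨eqv⟩⟩ := ih hys (ModuleCat.of R (QuotSMulTop y M)) hreg'
      exact ⟨N, z, hz, hnt,
        ⟨(Submodule.quotOfListConsSMulTopEquivQuotSMulTopInner M y ys).trans eqv⟩⟩

end InfiniteRadiusAux

open Pointwise


/-- if `M/(x₁,…,x_n)M ∈ X` for an `M`-regular sequence `x₁,…,x_n`,
then `X` has infinite radius. -/
theorem stmt11 (R : Type) [CommRing R] [IsNoetherianRing R] [IsLocalRing R]
    (X : ModuleCat.{0} R → Prop) (hX : Resolving R X)
    (M : ModuleCat.{0} R) (hMfg : Module.Finite R M)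
    (xs : List R) (hne : xs ≠ [])
    (hreg : RingTheory.Sequence.IsRegular M xs)
    (hmem : X (ModuleCat.of R (M ⧸ (Ideal.ofList xs • (⊤ : Submodule R M))))) :
    ¬ FiniteRadius R X := by
  classical
  intro hFR
  obtain ⟨C, n, hC, hball⟩ := hFR
  obtain ⟨N, x, hx, hnt, ⟨eqv⟩⟩ := reduce_regular_sequence xs hne M hreg
  obtain ⟨e₀, he₀⟩ := torBdd_exists R x
  haveI : Module.Finite R C := hX.fg C hC
  obtain ⟨eC, heC⟩ := torBdd_exists ↥C x
  set eB := (n + 1) * max e₀ eC with heB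
  -- the family of quotients N ⧸ xᵗN
  set J : ℕ → Submodule R ↥N := fun s => LinearMap.range (LinearMap.lsmul R ↥N (x ^ s)) with hJ
  set Nt : ℕ → ModuleCat.{0} R := fun s => ModuleCat.of R (↥N ⧸ J s) with hNt
  have hJ1 : (x • ⊤ : Submodule R ↥N) = J 1 := by
    ext m
    constructor
    · rintro ⟨w, -, rfl⟩
      exact ⟨w, by simp [pow_one]⟩
    · rintro ⟨w, rfl⟩
      simpa [pow_one] using Submodule.smul_mem_pointwise_smul w x ⊤ trivial
  have eqv2 : QuotSMulTop x ↥N ≃ₗ[R] ↥N ⧸ J 1 := Submodule.quotEquivOfEq _ _ hJ1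
  have hXNt1 : X (Nt 1) := by
    refine hX.summand _ (Nt 1) (ModuleCat.of R PUnit) hmem ?_
    exact ⟨(eqv.trans eqv2).trans (linearEquivProdPUnit (↥N ⧸ J 1))⟩
  have hstep : ∀ s : ℕ, X (Nt (s + 1)) → X (Nt (s + 2)) := by
    intro s hs
    have hle1 : J (s + 1) ≤ Submodule.comap (LinearMap.lsmul R ↥N x) (J (s + 2)) := by
      rintro m ⟨w, rfl⟩
      rw [Submodule.mem_comap]
      refine ⟨w, ?_⟩
      simp only [LinearMap.lsmul_apply]
      rw [smul_smul, ← pow_succ']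
    have hle2 : J (s + 2) ≤ Submodule.comap (LinearMap.id : ↥N →ₗ[R] ↥N) (J 1) := by
      rintro m ⟨w, rfl⟩
      simp only [Submodule.mem_comap, LinearMap.id_coe, id_eq]
      refine ⟨x ^ (s + 1) • w, ?_⟩
      simp only [LinearMap.lsmul_apply]
      rw [pow_one, smul_smul, ← pow_succ']
    set f : ↥(Nt (s + 1)) →ₗ[R] ↥(Nt (s + 2)) := Submodule.mapQ _ _ _ hle1 with hf
    set g : ↥(Nt (s + 2)) →ₗ[R] ↥(Nt 1) := Submodule.mapQ _ _ _ hle2 with hg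
    have hinj : Function.Injective f := by
      rw [injective_iff_map_eq_zero]
      intro z hz
      obtain ⟨m, rfl⟩ := Submodule.Quotient.mk_surjective (J (s + 1)) z
      rw [hf] at hz
      erw [Submodule.mapQ_apply] at hz
      rw [Submodule.Quotient.mk_eq_zero] at hz
      obtain ⟨w, hw⟩ := hz
      rw [Submodule.Quotient.mk_eq_zero]
      refine ⟨w, ?_⟩
      simp only [LinearMap.lsmul_apply] at hw ⊢
      apply hx
      show x • x ^ (s + 1) • w = x • m
      rw [smul_smul, ← pow_succ']
      exact hw
    have hsurj : Function.Surjective g := by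
      intro z
      obtain ⟨m, rfl⟩ := Submodule.Quotient.mk_surjective (J 1) z
      exact ⟨Submodule.Quotient.mk m, rfl⟩
    have hker : LinearMap.ker g = LinearMap.range f := by
      ext z
      obtain ⟨m, rfl⟩ := Submodule.Quotient.mk_surjective (J (s + 2)) z
      constructor
      · intro hz
        rw [LinearMap.mem_ker, hg] at hz
        erw [Submodule.mapQ_apply] at hz
        rw [Submodule.Quotient.mk_eq_zero] at hz
        obtain ⟨w, hw⟩ := hz
        refine ⟨Submodule.Quotient.mk w, ?_⟩
        rw [hf]
        erw [Submodule.mapQ_apply]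
        have hxm : (LinearMap.lsmul R ↥N x) w = m := by
          simpa only [LinearMap.lsmul_apply, pow_one, LinearMap.id_coe, id_eq] using hw
        rw [hxm]
      · rintro ⟨z', hz'⟩
        rw [LinearMap.mem_ker, ← hz']
        obtain ⟨w, rfl⟩ := Submodule.Quotient.mk_surjective (J (s + 1)) z'
        rw [hf, hg]
        erw [Submodule.mapQ_apply]
        rw [Submodule.Quotient.mk_eq_zero]
        refine ⟨w, ?_⟩
        simp only [LinearMap.lsmul_apply, LinearMap.id_coe, id_eq]
        rw [pow_one]
    exact hX.extension (Nt (s + 1)) (Nt (s + 2)) (Nt 1) f g ⟨hinj, hsurj, hker⟩ hs hXNt1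
  have hXt : ∀ s : ℕ, X (Nt (s + 1)) := by
    intro s
    induction s with
    | zero => exact hXNt1
    | succ s ih => exact hstep s ih
  have hballNt := hball (Nt (eB + 1)) (hXt eB)
  have hbdd : TorBdd x eB ↥(Nt (eB + 1)) := torBdd_ball he₀ heC n (Nt (eB + 1)) hballNt
  have hall : ∀ m : ↥N, ∃ w : ↥N, x • w = m := by
    intro m
    have htor : x ^ eB • (Submodule.Quotient.mk m : ↥N ⧸ J (eB + 1)) = 0 := by
      apply hbdd
      refine ⟨eB + 1, ?_⟩
      rw [← Submodule.Quotient.mk_smul, Submodule.Quotient.mk_eq_zero]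
      exact ⟨m, by simp⟩
    rw [← Submodule.Quotient.mk_smul, Submodule.Quotient.mk_eq_zero] at htor
    obtain ⟨w, hw⟩ := htor
    simp only [LinearMap.lsmul_apply] at hw
    refine ⟨w, hx.pow eB (show x ^ eB • (x • w) = x ^ eB • m from ?_)⟩
    rw [smul_smul, ← pow_succ]
    exact hw
  apply hnt
  constructor
  intro a b
  obtain ⟨ma, rfl⟩ := Submodule.Quotient.mk_surjective _ a
  obtain ⟨mb, rfl⟩ := Submodule.Quotient.mk_surjective _ b
  obtain ⟨wa, hwa⟩ := hall ma
  obtain ⟨wb, hwb⟩ := hall mb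
  have hz : ∀ u : ↥N, (Submodule.Quotient.mk (x • u) : QuotSMulTop x ↥N) = 0 := fun u =>
    (Submodule.Quotient.mk_eq_zero _).mpr (Submodule.smul_mem_pointwise_smul u x ⊤ trivial)
  rw [← hwa, ← hwb, hz wa, hz wb]
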